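/- For every packing sequence S and every positive integer n, the path P_n is χ_S-vertex-critical if and only if it is χ_S-critical. -/

import Mathlib

open SimpleGraph

/-- `IsSPackingColoring G s φ` : `φ` is an `S`-packing coloring of `G` with colors
`Fin k`, where the value `s i` represents the entry `s_{i+1}` of the packing
sequence `S = (s_1, s_2, …)` (0-indexed encoding), and the color `j : Fin k`
represents color `j+1`: two distinct vertices sharing a color `i` (1-indexed)
must be at distance greater than `s_i`. -/
def IsSPackingColoring {V : Type*} (G : SimpleGraph V) (s : ℕ → ℕ) {k : ℕ}
    (φ : V → Fin k) : Prop :=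
  ∀ u v : V, u ≠ v → φ u = φ v → (s (φ u) : ℕ∞) < G.edist u v

/-- The `S`-packing chromatic number of `G`: the least `k` admitting an
`S`-packing `k`-coloring. -/
noncomputable def SPackingChromatic {V : Type*} (G : SimpleGraph V) (s : ℕ → ℕ) : ℕ :=
  sInf {k | ∃ φ : V → Fin k, IsSPackingColoring G s φ}

/-- `G` is `χ_S`-critical: every proper subgraph has a strictly smaller
`S`-packing chromatic number. -/
def SCritical {V : Type*} (G : SimpleGraph V) (s : ℕ → ℕ) : Prop :=
  ∀ H : G.Subgraph, H ≠ ⊤ → SPackingChromatic H.coe s < SPackingChromatic G s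

/-- `G` is `χ_S`-vertex-critical: deleting any vertex strictly decreases the
`S`-packing chromatic number. -/
def SVertexCritical {V : Type*} (G : SimpleGraph V) (s : ℕ → ℕ) : Prop :=
  ∀ v : V, SPackingChromatic (G.induce {u | u ≠ v}) s < SPackingChromatic G s

private lemma edist_map_le' {V W : Type*} {G : SimpleGraph V} {G' : SimpleGraph W}
    (f : G →g G') (u v : V) : G'.edist (f u) (f v) ≤ G.edist u v := by
  rw [SimpleGraph.edist]
  refine le_iInf fun w => ?_
  calc G'.edist (f u) (f v) ≤ ((w.map f).length : ℕ∞) := SimpleGraph.edist_le _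
    _ = (w.length : ℕ∞) := by simp

private lemma chrom_mono' {V W : Type*} [Finite W] (s : ℕ → ℕ)
    (G : SimpleGraph V) (G' : SimpleGraph W) (f : V → W)
    (hadj : ∀ a b, G.Adj a b → G'.Adj (f a) (f b))
    (hfib : ∀ a b, a ≠ b → f a = f b → G.edist a b = ⊤) :
    SPackingChromatic G s ≤ SPackingChromatic G' s := by
  have hne : ∃ φ : W → Fin (SPackingChromatic G' s), IsSPackingColoring G' s φ := by
    have := Fintype.ofFinite W
    have hmem : Fintype.card W ∈ {k | ∃ φ : W → Fin k, IsSPackingColoring G' s φ} :=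
      ⟨Fintype.equivFin W, fun u v huv h => absurd ((Fintype.equivFin W).injective h) huv⟩
    exact Nat.sInf_mem ⟨_, hmem⟩
  obtain ⟨φ, hφ⟩ := hne
  apply Nat.sInf_le
  refine ⟨φ ∘ f, fun u v huv h => ?_⟩
  by_cases hf : f u = f v
  · rw [hfib u v huv hf]
    exact lt_of_lt_of_le (ENat.coe_lt_top _) le_rfl
  · exact lt_of_lt_of_le (hφ (f u) (f v) hf h)
      (edist_map_le' ⟨f, fun h => hadj _ _ h⟩ u v)

private lemma reachable_pred' {V : Type*} {G : SimpleGraph V} (p : V → Prop)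
    (h : ∀ a b, G.Adj a b → (p a ↔ p b)) {u v : V} (hr : G.Reachable u v) :
    p u ↔ p v := by
  obtain ⟨w⟩ := hr
  induction w with
  | nil => rfl
  | cons hadj w ih => exact (h _ _ hadj).trans ih

theorem stmt13 (s : ℕ → ℕ) (hmono : Monotone s) (hpos : ∀ i, 1 ≤ s i)
    (n : ℕ) (hn : 1 ≤ n) :
    SVertexCritical (pathGraph n) s ↔ SCritical (pathGraph n) s := by
  constructor
  · -- vertex-critical → critical
    intro hvc H hH
    by_cases hall : ∀ v : Fin n, v ∈ H.verts
    · -- all vertices present; some edge missing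
      have hAdjne : ∃ a b : Fin n, (pathGraph n).Adj a b ∧ ¬ H.Adj a b := by
        by_contra hc
        push_neg at hc
        apply hH
        ext x y
        · simp [Subgraph.verts_top, hall x]
        · simp only [Subgraph.top_adj]
          exact ⟨fun h => H.adj_sub h, fun h => hc x y h⟩
      obtain ⟨a, b, hGab, hHab⟩ := hAdjne
      -- normalize to an edge (i, i+1)
      have hedge : ∃ i : ℕ, ∃ hilt : i + 1 < n,
          ¬ H.Adj ⟨i, by omega⟩ ⟨i + 1, hilt⟩ := by
        rcases pathGraph_adj.mp hGab with h1 | h1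
        · refine ⟨a.val, by omega, fun hc => hHab ?_⟩
          have ha : (⟨a.val, by omega⟩ : Fin n) = a := rfl
          have hb : (⟨a.val + 1, by omega⟩ : Fin n) = b := Fin.ext h1
          rwa [ha, hb] at hc
        · refine ⟨b.val, by omega, fun hc => hHab ?_⟩
          have hb : (⟨b.val, by omega⟩ : Fin n) = b := rfl
          have ha : (⟨b.val + 1, by omega⟩ : Fin n) = a := Fin.ext h1
          rw [hb, ha] at hc
          exact H.adj_symm hc
      obtain ⟨i, hilt, hHi⟩ := hedge
      have hnn : 2 ≤ n := by omega
      have hvn : n - 1 < n := by omega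
      refine lt_of_le_of_lt ?_ (hvc ⟨n - 1, hvn⟩)
      refine chrom_mono' s H.coe ((pathGraph n).induce {u | u ≠ ⟨n - 1, hvn⟩})
        (fun a => if h : a.1.val ≤ i then
            ⟨⟨a.1.val, by omega⟩, by
              simp only [Set.mem_setOf_eq, ne_eq, Fin.mk.injEq]; omega⟩
          else ⟨⟨a.1.val - 1, by omega⟩, by
            have := a.1.isLt
            simp only [Set.mem_setOf_eq, ne_eq, Fin.mk.injEq]; omega⟩) ?_ ?_
      · -- adjacency
        intro x y hxy
        have hH' : H.Adj x.1 y.1 := hxy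
        have hG' := pathGraph_adj.mp (H.adj_sub hH')
        have hcross1 : ¬ (x.1.val = i ∧ y.1.val = i + 1) := by
          rintro ⟨h1, h2⟩
          apply hHi
          have hx : (⟨i, by omega⟩ : Fin n) = x.1 := Fin.ext h1.symm
          have hy : (⟨i + 1, hilt⟩ : Fin n) = y.1 := Fin.ext h2.symm
          rw [hx, hy]; exact hH'
        have hcross2 : ¬ (y.1.val = i ∧ x.1.val = i + 1) := by
          rintro ⟨h1, h2⟩
          apply hHi
          have hy : (⟨i, by omega⟩ : Fin n) = y.1 := Fin.ext h1.symm
          have hx : (⟨i + 1, hilt⟩ : Fin n) = x.1 := Fin.ext h2.symm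
          rw [hx, hy]; exact H.adj_symm hH'
        simp only [comap_adj, Function.Embedding.coe_subtype]
        split_ifs with h1 h2 h2 <;> rw [pathGraph_adj] <;> dsimp only <;> omega
      · -- fibers are at infinite distance
        intro x y hxy hf
        have hne : x.1.val ≠ y.1.val := by
          intro h
          exact hxy (Subtype.ext (Fin.ext h))
        have hvals : (x.1.val = i ∧ y.1.val = i + 1) ∨
            (y.1.val = i ∧ x.1.val = i + 1) := by
          have hval := congrArg (fun z => z.1.val) hf
          split_ifs at hval <;> dsimp only at hval <;> omega
        -- x and y are not reachable in H.coe
        apply SimpleGraph.edist_eq_top_of_not_reachable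
        intro hr
        have hpres : ∀ a b : ↥H.verts, H.coe.Adj a b → (a.1.val ≤ i ↔ b.1.val ≤ i) := by
          intro a b hab
          have hH' : H.Adj a.1 b.1 := hab
          have hG' := pathGraph_adj.mp (H.adj_sub hH')
          constructor
          · intro hai
            by_contra hbi
            have h1 : a.1.val = i := by omega
            have h2 : b.1.val = i + 1 := by omega
            apply hHi
            have hx : (⟨i, by omega⟩ : Fin n) = a.1 := Fin.ext h1.symm
            have hy : (⟨i + 1, hilt⟩ : Fin n) = b.1 := Fin.ext h2.symm
            rw [hx, hy]; exact hH'
          · intro hbi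
            by_contra hai
            have h1 : b.1.val = i := by omega
            have h2 : a.1.val = i + 1 := by omega
            apply hHi
            have hy : (⟨i, by omega⟩ : Fin n) = b.1 := Fin.ext h1.symm
            have hx : (⟨i + 1, hilt⟩ : Fin n) = a.1 := Fin.ext h2.symm
            rw [hx, hy]; exact H.adj_symm hH'
        have := reachable_pred' _ hpres hr
        rcases hvals with ⟨h1, h2⟩ | ⟨h1, h2⟩ <;> omega
    · -- some vertex missing
      push_neg at hall
      obtain ⟨v, hv⟩ := hall
      refine lt_of_le_of_lt ?_ (hvc v)
      refine chrom_mono' s H.coe ((pathGraph n).induce {u | u ≠ v})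
        (fun a => ⟨a.1, fun h => hv (h ▸ a.2)⟩) ?_ ?_
      · intro a b hab
        simpa using H.adj_sub hab
      · intro a b hab hf
        exact absurd (Subtype.ext (congrArg (fun z => z.1) hf)) hab
  · -- critical → vertex-critical
    intro hc v
    set H : (pathGraph n).Subgraph :=
      { verts := {u | u ≠ v}
        Adj := fun a b => a ≠ v ∧ b ≠ v ∧ (pathGraph n).Adj a b
        adj_sub := fun h => h.2.2
        edge_vert := fun h => h.1
        symm := ⟨fun a b h => ⟨h.2.1, h.1, h.2.2.symm⟩⟩ } with hHdef
    have hne : H ≠ ⊤ := by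
      intro h
      have hverts : H.verts = (⊤ : (pathGraph n).Subgraph).verts := by rw [h]
      rw [Subgraph.verts_top] at hverts
      have : v ∈ H.verts := hverts ▸ Set.mem_univ v
      exact this rfl
    have hcoe : H.coe = (pathGraph n).induce {u | u ≠ v} := by
      ext a b
      simp only [Subgraph.coe_adj, comap_adj, Function.Embedding.coe_subtype]
      exact ⟨fun h => h.2.2, fun h => ⟨a.2, b.2, h⟩⟩
    calc SPackingChromatic ((pathGraph n).induce {u | u ≠ v}) s
        = SPackingChromatic H.coe s := by rw [hcoe]
      _ < SPackingChromatic (pathGraph n) s := hc H hne
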